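/- Assume the covering setup: n, p ≥ 1; real r with 2 ≤ r < ∞ and q = r/(r−1); X_b, B_b > 0; X ∈ ℝ^{n×p} with rows x_i satisfying ‖x_i‖_r ≤ X_b and nonzero columns h_1, ..., h_p; scaled columns h̃_j := (n^{1/r} X_b B_b / ‖h_j‖_r) h_j; constraint data c_{jν} ∈ ℝ and δ_ν > 0 (ν = 1..V) with c̃_{jν} := c_{jν} n^{1/r} X_b B_b / ‖h_j‖_r and Σ_j |c̃_{jν}| > 0 for each ν; B := {β ∈ ℝ^p : ‖β‖_q ≤ B_b and Σ_j c_{jν} β_j + δ_ν ≤ 1 for all ν}; F|S := {Xβ : β ∈ B} ⊆ ℝⁿ; for K ∈ ℕ, P^K := {k ∈ ℤ^p : Σ_j |k_j| ≤ K} and P_c^K := {k ∈ P^K : Σ_j c̃_{jν} k_j ≤ K for all ν}; X̃ := [h̃_1 ⋯ h̃_p] with smallest eigenvalue λ of X̃ᵀX̃ assumed positive. Let ε > 0, K₀ := ⌈X_b² B_b²/ε²⌉ and K := max{K₀, ⌈n X_b² B_b²/(λ · [min_ν δ_ν/(Σ_j |c̃_{jν}|)]²)⌉}. If ε < X_b B_b,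 then there exists a finite set U ⊆ ℝⁿ with cardinality at most min{|P^{K₀}|, |P_c^{K}|} such that every y ∈ F|S satisfies ‖y − u‖₂ ≤ √n ε for some u ∈ U; if ε ≥ X_b B_b, such a set U of cardinality 1 exists. In other words, the √n ε-covering number of F|S in Euclidean norm is at most min{|P^{K₀}|, |P_c^{K}|} when ε < X_b B_b and equals 1 otherwise. -/

import Mathlib

noncomputable def lpNorm {ι : Type*} [Fintype ι] (r : ℝ) (v : ι → ℝ) : ℝ :=
  (∑ i, |v i| ^ r) ^ (1 / r)

lemma lpNorm_nonneg {ι : Type*} [Fintype ι] (r : ℝ) (v : ι → ℝ) : 0 ≤ lpNorm r v :=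
  Real.rpow_nonneg (Finset.sum_nonneg fun _ _ => Real.rpow_nonneg (abs_nonneg _) r) _

lemma lpNorm_pos {ι : Type*} [Fintype ι] {r : ℝ} (hr : 0 < r) {v : ι → ℝ} (hv : v ≠ 0) :
    0 < lpNorm r v := by
  have h : ∃ i, v i ≠ 0 := by
    by_contra h; push_neg at h; exact hv (funext h)
  obtain ⟨i, hi⟩ := h
  have hsum : 0 < ∑ i, |v i| ^ r := by
    refine Finset.sum_pos' (fun i _ => Real.rpow_nonneg (abs_nonneg _) r) ⟨i, Finset.mem_univ i, ?_⟩
    exact Real.rpow_pos_of_pos (abs_pos.2 hi) r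
  exact Real.rpow_pos_of_pos hsum _

lemma lpNorm_rpow {ι : Type*} [Fintype ι] {r : ℝ} (hr : 0 < r) (v : ι → ℝ) :
    (lpNorm r v) ^ r = ∑ i, |v i| ^ r := by
  rw [lpNorm, ← Real.rpow_mul (Finset.sum_nonneg fun i _ => Real.rpow_nonneg (abs_nonneg _) r),
    one_div, inv_mul_cancel₀ hr.ne', Real.rpow_one]

lemma holder_sum {ι : Type*} [Fintype ι] {r q : ℝ} (hr : 1 < r) (hq : q = r / (r - 1))
    (a b : ι → ℝ) : ∑ j, |a j| * |b j| ≤ lpNorm r a * lpNorm q b := by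
  have hpq : r.HolderConjugate q := hq ▸ Real.HolderConjugate.conjExponent hr
  have := Real.inner_le_Lp_mul_Lq (Finset.univ) (fun j => |a j|) (fun j => |b j|) hpq
  simpa [lpNorm, abs_abs] using this

lemma l2_le_lr {ι : Type*} [Fintype ι] {r : ℝ} (hr : 2 ≤ r) (v : ι → ℝ) :
    ∑ i, (v i) ^ 2 ≤ (Fintype.card ι : ℝ) ^ (1 - 2 / r) * (lpNorm r v) ^ 2 := by
  have hr0 : (0:ℝ) < r := lt_of_lt_of_le two_pos hr
  have hSnn : (0:ℝ) ≤ ∑ i, |v i| ^ r :=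
    Finset.sum_nonneg fun _ _ => Real.rpow_nonneg (abs_nonneg _) r
  have hlp2 : (lpNorm r v) ^ 2 = (∑ i, |v i| ^ r) ^ (2 / r) := by
    rw [lpNorm, ← Real.rpow_natCast (_ ^ (1/r)) 2, ← Real.rpow_mul hSnn]
    norm_num
    rw [inv_mul_eq_div]
  rcases eq_or_lt_of_le hr with hr2 | hr2
  · rw [hlp2, ← hr2]
    norm_num
  · have h1 : (1:ℝ) < r / 2 := by linarith
    have hpq := Real.HolderConjugate.conjExponent h1
    have key := Real.inner_le_Lp_mul_Lq (Finset.univ) (fun i => (v i)^2) (fun _ => (1:ℝ)) hpq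
    simp only [mul_one, abs_one, Real.one_rpow, Finset.sum_const, Finset.card_univ,
      nsmul_eq_mul] at key
    have habs : ∀ i : ι, |(v i)^2| ^ (r/2) = |v i| ^ r := by
      intro i
      rw [abs_pow, sq_abs, ← sq_abs, ← Real.rpow_natCast |v i| 2, ← Real.rpow_mul (abs_nonneg _)]
      norm_num
      rw [show (2:ℝ) * (r/2) = r by ring]
    have hsum_eq : ∑ i, |(v i)^2| ^ (r/2) = ∑ i, |v i| ^ r :=
      Finset.sum_congr rfl fun i _ => habs i
    rw [hsum_eq] at key
    have hinv1 : 1 / (r/2) = 2 / r := by field_simp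
    have hinv2 : 1 / (r/2).conjExponent = 1 - 2 / r := by
      rw [Real.conjExponent]
      have h2 : r - 2 ≠ 0 := by linarith
      have h3 : r / 2 - 1 = (r - 2) / 2 := by ring
      rw [h3]
      field_simp
    rw [hinv1, hinv2] at key
    rw [hlp2]
    calc ∑ i, (v i)^2 ≤ (∑ i, |v i| ^ r) ^ (2/r) * (Fintype.card ι : ℝ) ^ (1 - 2/r) := key
      _ = _ := mul_comm _ _


lemma exists_le_avg {σ : Type*} [Fintype σ] (w F : σ → ℝ) (hw : ∀ s, 0 ≤ w s)
    (hw1 : ∑ s, w s = 1) {M2 : ℝ} (h : ∑ s, w s * F s ≤ M2) : ∃ s, F s ≤ M2 := by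
  by_contra h'
  push_neg at h'
  obtain ⟨s0, hs0⟩ : ∃ s, 0 < w s := by
    by_contra h''
    push_neg at h''
    have : ∑ s, w s = 0 := Finset.sum_eq_zero fun s _ => le_antisymm (h'' s) (hw s)
    rw [this] at hw1; norm_num at hw1
  have hlt : ∑ s, w s * M2 < ∑ s, w s * F s :=
    Finset.sum_lt_sum (fun s _ => mul_le_mul_of_nonneg_left (h' s).le (hw s))
      ⟨s0, Finset.mem_univ s0, mul_lt_mul_of_pos_left (h' s0) hs0⟩
  rw [← Finset.sum_mul, hw1, one_mul] at hlt
  linarith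

lemma maurey {n : ℕ} {σ : Type*} [Fintype σ] (u : σ → Fin n → ℝ) (w : σ → ℝ)
    (hw : ∀ s, 0 ≤ w s) (hw1 : ∑ s, w s = 1) (M2 : ℝ)
    (hu : ∀ s, ∑ i, (u s i) ^ 2 ≤ M2)
    (y : Fin n → ℝ) (hy : ∀ i, y i = ∑ s, w s * u s i) (K : ℕ) :
    ∃ m : σ → ℕ, (∑ s, m s) = K ∧
      ∑ i, ((∑ s, (m s : ℝ) * u s i) - K * y i) ^ 2 ≤ K * M2 := by
  classical
  induction K with
  | zero => exact ⟨0, by simp, by simp⟩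
  | succ t ih =>
    obtain ⟨m, hm, hE⟩ := ih
    set E : Fin n → ℝ := fun i => (∑ s, (m s : ℝ) * u s i) - t * y i with hEdef
    have h0 : ∑ s, w s * (2 * ∑ i, E i * (u s i - y i)) = 0 := by
      have e1 : ∑ s, w s * (2 * ∑ i, E i * (u s i - y i))
          = ∑ s, ∑ i, 2 * E i * (w s * (u s i - y i)) :=
        Finset.sum_congr rfl fun s _ => by
          rw [Finset.mul_sum, Finset.mul_sum]
          exact Finset.sum_congr rfl fun i _ => by ring
      rw [e1, Finset.sum_comm]
      refine Finset.sum_eq_zero fun i _ => ?_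
      have e2 : ∑ s, 2 * E i * (w s * (u s i - y i))
          = 2 * E i * ((∑ s, w s * u s i) - (∑ s, w s) * y i) := by
        rw [← Finset.mul_sum]
        congr 1
        simp [mul_sub, Finset.sum_sub_distrib, Finset.sum_mul]
      rw [e2, hw1, one_mul, ← hy i]
      simp
    have h1 : ∑ s, w s * (∑ i, (u s i - y i) ^ 2) ≤ M2 := by
      have e2 : ∑ s, w s * (∑ i, (u s i - y i) ^ 2)
          = (∑ s, w s * ∑ i, (u s i) ^ 2) - ∑ i, (y i) ^ 2 := by
        have per : ∀ s, w s * (∑ i, (u s i - y i) ^ 2)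
            = w s * (∑ i, (u s i) ^ 2) - 2 * (∑ i, (w s * u s i) * y i)
              + w s * ∑ i, (y i) ^ 2 := by
          intro s
          simp only [Finset.mul_sum, ← Finset.sum_sub_distrib, ← Finset.sum_add_distrib]
          exact Finset.sum_congr rfl fun i _ => by ring
        rw [Finset.sum_congr rfl fun s _ => per s]
        rw [Finset.sum_add_distrib, Finset.sum_sub_distrib, ← Finset.sum_mul, hw1, one_mul,
          ← Finset.mul_sum, Finset.sum_comm]
        have : ∑ i, ∑ s, (w s * u s i) * y i = ∑ i, (y i) ^ 2 := by
          refine Finset.sum_congr rfl fun i _ => ?_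
          rw [← Finset.sum_mul, ← hy i]; ring
        rw [this]
        ring
      rw [e2]
      have hb : ∑ s, w s * ∑ i, (u s i) ^ 2 ≤ ∑ s, w s * M2 :=
        Finset.sum_le_sum fun s _ => mul_le_mul_of_nonneg_left (hu s) (hw s)
      rw [← Finset.sum_mul, hw1, one_mul] at hb
      have hy2 : 0 ≤ ∑ i, (y i) ^ 2 := Finset.sum_nonneg fun i _ => sq_nonneg _
      linarith
    have havg : ∑ s, w s * ((2 * ∑ i, E i * (u s i - y i)) + ∑ i, (u s i - y i) ^ 2) ≤ M2 := by
      simp only [mul_add, Finset.sum_add_distrib, h0, zero_add]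
      exact h1
    obtain ⟨s, hs⟩ := exists_le_avg w _ hw hw1 havg
    refine ⟨fun s' => m s' + if s' = s then 1 else 0, ?_, ?_⟩
    · rw [Finset.sum_add_distrib, hm, Finset.sum_ite_eq' Finset.univ s fun _ => 1]
      simp
    · have hnew : ∀ i, (∑ s', ((m s' + if s' = s then 1 else 0 : ℕ) : ℝ) * u s' i)
          - ((t : ℕ) + 1 : ℝ) * y i = E i + (u s i - y i) := by
        intro i
        push_cast
        simp only [add_mul, Finset.sum_add_distrib, hEdef]
        rw [Finset.sum_congr rfl fun s' (_ : s' ∈ Finset.univ) =>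
          (by split <;> simp : ((if s' = s then (1:ℝ) else 0) * u s' i)
            = if s' = s then u s' i else 0),
          Finset.sum_ite_eq' Finset.univ s fun s' => u s' i]
        simp only [Finset.mem_univ, if_true]
        ring
      have cast1 : ((t + 1 : ℕ) : ℝ) = (t : ℝ) + 1 := by push_cast; ring
      calc ∑ i, ((∑ s', ((m s' + if s' = s then 1 else 0 : ℕ) : ℝ) * u s' i)
              - ((t + 1 : ℕ) : ℝ) * y i) ^ 2
          = ∑ i, (E i + (u s i - y i)) ^ 2 := by
            refine Finset.sum_congr rfl fun i _ => ?_
            rw [cast1, hnew i]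
        _ = (∑ i, E i ^ 2) + ((2 * ∑ i, E i * (u s i - y i)) + ∑ i, (u s i - y i) ^ 2) := by
            rw [Finset.mul_sum, ← Finset.sum_add_distrib, ← Finset.sum_add_distrib]
            exact Finset.sum_congr rfl fun i _ => by ring
        _ ≤ (t : ℝ) * M2 + M2 := add_le_add hE hs
        _ = ((t + 1 : ℕ) : ℝ) * M2 := by push_cast; ring

lemma key_step
    (n p : ℕ) (hn : 1 ≤ n) (r q : ℝ) (hr : 2 ≤ r) (hq : q = r / (r - 1))
    (Xb Bb : ℝ) (hXb : 0 < Xb) (hBb : 0 < Bb)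
    (X : Matrix (Fin n) (Fin p) ℝ)
    (hrow : ∀ i, lpNorm r (X i) ≤ Xb)
    (hcolne : ∀ j, (fun i => X i j) ≠ 0)
    (ht : Fin p → Fin n → ℝ)
    (hht : ∀ j, ht j = fun i =>
      ((n : ℝ) ^ (1 / r) * Xb * Bb / lpNorm r (fun i' => X i' j)) * X i j)
    (β : Fin p → ℝ) (hβ : lpNorm q β ≤ Bb) (K' : ℕ) (hK' : 0 < K') :
    ∃ (k : Fin p → ℤ) (α : Fin p → ℝ),
      α = (fun j => β j * lpNorm r (fun i => X i j) / ((n : ℝ) ^ (1 / r) * Xb * Bb)) ∧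
      (∑ j, |k j|) ≤ (K' : ℤ) ∧
      (∀ i, X.mulVec β i = ∑ j, α j * ht j i) ∧
      (∀ j, α j * ((n : ℝ) ^ (1 / r) * Xb * Bb / lpNorm r (fun i => X i j)) = β j) ∧
      ∑ i, (X.mulVec β i - ∑ j, ((k j : ℝ) / K') * ht j i) ^ 2
        ≤ (n : ℝ) * Xb ^ 2 * Bb ^ 2 / K' := by
  classical
  have hr0 : (0:ℝ) < r := lt_of_lt_of_le two_pos hr
  have hr1 : (1:ℝ) < r := lt_of_lt_of_le one_lt_two hr
  have hn0 : (0:ℝ) < n := by exact_mod_cast hn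
  set N : ℝ := (n : ℝ) ^ (1 / r) * Xb * Bb with hN
  have hNpos : 0 < N := by
    have := Real.rpow_pos_of_pos hn0 (1 / r)
    positivity
  have hcol : ∀ j, 0 < lpNorm r (fun i => X i j) := fun j => lpNorm_pos hr0 (hcolne j)
  set α : Fin p → ℝ := fun j => β j * lpNorm r (fun i => X i j) / N with hα
  set M2 : ℝ := (n : ℝ) * Xb ^ 2 * Bb ^ 2 with hM2
  have hM2nn : 0 ≤ M2 := by positivity
  -- ℓ¹ bound on α
  have hα1 : ∑ j, |α j| ≤ 1 := by
    have hcalc := holder_sum hr1 hq (fun j => lpNorm r (fun i => X i j)) β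
    have hnn : lpNorm r (fun j => lpNorm r (fun i => X i j)) ≤ (n : ℝ) ^ (1 / r) * Xb := by
      have hpow : (lpNorm r (fun j => lpNorm r (fun i => X i j))) ^ r
          = ∑ j, ∑ i, |X i j| ^ r := by
        rw [lpNorm_rpow hr0]
        refine Finset.sum_congr rfl fun j _ => ?_
        rw [abs_of_nonneg (lpNorm_nonneg _ _), lpNorm_rpow hr0]
      have hbound : ∑ j, ∑ i, |X i j| ^ r ≤ (n : ℝ) * Xb ^ r := by
        rw [Finset.sum_comm]
        calc ∑ i, ∑ j, |X i j| ^ r = ∑ i : Fin n, (lpNorm r (X i)) ^ r :=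
              Finset.sum_congr rfl fun i _ => (lpNorm_rpow hr0 (X i)).symm
          _ ≤ ∑ _i : Fin n, Xb ^ r := Finset.sum_le_sum fun i _ =>
              Real.rpow_le_rpow (lpNorm_nonneg _ _) (hrow i) hr0.le
          _ = (n : ℝ) * Xb ^ r := by simp [mul_comm]
      have hrhs : ((n : ℝ) ^ (1 / r) * Xb) ^ r = (n : ℝ) * Xb ^ r := by
        rw [Real.mul_rpow (Real.rpow_nonneg hn0.le _) hXb.le,
          ← Real.rpow_mul hn0.le, one_div, inv_mul_cancel₀ hr0.ne', Real.rpow_one]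
      refine (Real.rpow_le_rpow_iff (lpNorm_nonneg _ _) (by positivity) hr0).mp ?_
      rw [hpow, hrhs]
      exact hbound
    have habs : ∀ j, |α j| = lpNorm r (fun i => X i j) * |β j| / N := by
      intro j
      rw [hα]
      rw [abs_div, abs_of_pos hNpos, abs_mul, abs_of_pos (hcol j)]
      ring
    calc ∑ j, |α j| = (∑ j, lpNorm r (fun i => X i j) * |β j|) / N := by
          rw [Finset.sum_div]; exact Finset.sum_congr rfl fun j _ => habs j
      _ ≤ (lpNorm r (fun j => lpNorm r (fun i => X i j)) * lpNorm q β) / N := by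
          refine (div_le_div_iff_of_pos_right hNpos).mpr ?_
          refine le_trans (le_of_eq ?_) hcalc
          exact Finset.sum_congr rfl fun j _ => by
            rw [abs_of_pos (hcol j)]
      _ ≤ ((n : ℝ) ^ (1 / r) * Xb * Bb) / N := by
          refine (div_le_div_iff_of_pos_right hNpos).mpr ?_
          exact mul_le_mul hnn hβ (lpNorm_nonneg _ _) (by positivity)
      _ = 1 := by rw [← hN]; field_simp
  -- column bound
  have hM2col : ∀ j, ∑ i, (ht j i) ^ 2 ≤ M2 := by
    intro j
    set L : ℝ := lpNorm r (fun i => X i j) with hL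
    have hL0 : 0 < L := hcol j
    have hsum : ∑ i, (ht j i) ^ 2 = (N / L) ^ 2 * ∑ i, (X i j) ^ 2 := by
      rw [Finset.mul_sum]
      refine Finset.sum_congr rfl fun i _ => ?_
      rw [hht j]
      ring
    have hl2 := l2_le_lr hr (fun i => X i j)
    rw [Fintype.card_fin] at hl2
    have hNsq : (N / L) ^ 2 * ((n : ℝ) ^ (1 - 2 / r) * L ^ 2)
        = (n : ℝ) ^ (2 / r) * (Xb ^ 2 * Bb ^ 2) * (n : ℝ) ^ (1 - 2 / r) := by
      have hNexp : N ^ 2 = (n : ℝ) ^ (2 / r) * (Xb ^ 2 * Bb ^ 2) := by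
        rw [hN]
        rw [mul_pow, mul_pow, ← Real.rpow_natCast ((n:ℝ) ^ (1/r)) 2,
          ← Real.rpow_mul hn0.le]
        norm_num
        ring
      field_simp
      rw [hNexp]
      ring
    calc ∑ i, (ht j i) ^ 2 = (N / L) ^ 2 * ∑ i, (X i j) ^ 2 := hsum
      _ ≤ (N / L) ^ 2 * ((n : ℝ) ^ (1 - 2 / r) * L ^ 2) := by
          refine mul_le_mul_of_nonneg_left ?_ (by positivity)
          exact hl2
      _ = (n : ℝ) ^ (2 / r) * (Xb ^ 2 * Bb ^ 2) * (n : ℝ) ^ (1 - 2 / r) := hNsq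
      _ = M2 := by
          rw [hM2, mul_comm ((n:ℝ) ^ (2/r)) _, mul_assoc, ← Real.rpow_add hn0]
          norm_num
          ring
  -- set up Maurey data
  set u : Option (Bool × Fin p) → Fin n → ℝ := fun s => match s with
    | none => fun _ => 0
    | some (b, j) => fun i => if b then ht j i else -ht j i
    with hu_def
  set w : Option (Bool × Fin p) → ℝ := fun s => match s with
    | none => 1 - ∑ j, |α j|
    | some (b, j) => if b then max (α j) 0 else max (-(α j)) 0
    with hw_def
  have hmax : ∀ a : ℝ, max a 0 + max (-a) 0 = |a| := by
    intro a
    rcases le_total 0 a with h | h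
    · rw [max_eq_left h, max_eq_right (neg_nonpos.mpr h), add_zero, abs_of_nonneg h]
    · rw [max_eq_right h, max_eq_left (neg_nonneg.mpr h), zero_add, abs_of_nonpos h]
  have hmaxsub : ∀ a : ℝ, max a 0 - max (-a) 0 = a := by
    intro a
    rcases le_total 0 a with h | h
    · rw [max_eq_left h, max_eq_right (neg_nonpos.mpr h), sub_zero]
    · rw [max_eq_right h, max_eq_left (neg_nonneg.mpr h), zero_sub, neg_neg]
  have hw : ∀ s, 0 ≤ w s := by
    rintro (_ | ⟨b, j⟩)
    · simpa [hw_def] using sub_nonneg.mpr hα1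
    · simp only [hw_def]
      split <;> exact le_max_right _ _
  have hw1 : ∑ s, w s = 1 := by
    rw [Fintype.sum_option, Fintype.sum_prod_type, Fintype.sum_bool]
    simp only [hw_def]
    simp only [if_true, Bool.false_eq_true, if_false]
    rw [← Finset.sum_add_distrib,
      Finset.sum_congr rfl fun j (_ : j ∈ Finset.univ) => hmax (α j)]
    ring
  have hu_bound : ∀ s, ∑ i, (u s i) ^ 2 ≤ M2 := by
    rintro (_ | ⟨b, j⟩)
    · simpa [hu_def] using hM2nn
    · simp only [hu_def]
      cases b
      · simpa using hM2col j
      · simpa using hM2col j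
  set y : Fin n → ℝ := X.mulVec β with hy_def
  have hyalpha : ∀ i, y i = ∑ j, α j * ht j i := by
    intro i
    have : ∀ j, α j * ht j i = X i j * β j := by
      intro j
      rw [hht j, hα]
      have hLj := (hcol j).ne'
      field_simp
    rw [Finset.sum_congr rfl fun j (_ : j ∈ Finset.univ) => this j]
    simp [hy_def, Matrix.mulVec, dotProduct]
  have hy : ∀ i, y i = ∑ s, w s * u s i := by
    intro i
    rw [Fintype.sum_option, Fintype.sum_prod_type, Fintype.sum_bool]
    simp only [hw_def, hu_def]
    rw [← Finset.sum_add_distrib]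
    have hterm : ∀ j, max (α j) 0 * ht j i + max (-(α j)) 0 * (-(ht j i))
        = α j * ht j i := by
      intro j
      calc max (α j) 0 * ht j i + max (-(α j)) 0 * (-(ht j i))
          = (max (α j) 0 - max (-(α j)) 0) * ht j i := by ring
        _ = α j * ht j i := by rw [hmaxsub]
    simp only [if_true, Bool.false_eq_true, if_false, mul_zero, zero_add,
      ← Finset.sum_add_distrib]
    rw [Finset.sum_congr rfl fun j (_ : j ∈ Finset.univ) => hterm j]
    exact hyalpha i
  -- apply Maurey
  obtain ⟨m, hm, hE⟩ := maurey u w hw hw1 M2 hu_bound y hy K'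
  set k : Fin p → ℤ := fun j => (m (some (true, j)) : ℤ) - (m (some (false, j)) : ℤ)
    with hk_def
  have hsplit : ∑ s, m s
      = m none + ∑ j, (m (some (true, j)) + m (some (false, j))) := by
    rw [Fintype.sum_option, Fintype.sum_prod_type, Fintype.sum_bool,
      ← Finset.sum_add_distrib]
  have hk1 : ∑ j, |k j| ≤ (K' : ℤ) := by
    have hterm : ∀ j, |k j| ≤ (m (some (true, j)) : ℤ) + (m (some (false, j)) : ℤ) := by
      intro j
      rw [hk_def]
      calc |(m (some (true, j)) : ℤ) - (m (some (false, j)) : ℤ)|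
          ≤ |(m (some (true, j)) : ℤ)| + |(m (some (false, j)) : ℤ)| := abs_sub _ _
        _ = (m (some (true, j)) : ℤ) + (m (some (false, j)) : ℤ) := by
            rw [abs_of_nonneg (Int.natCast_nonneg _), abs_of_nonneg (Int.natCast_nonneg _)]
    calc ∑ j, |k j| ≤ ∑ j, ((m (some (true, j)) : ℤ) + (m (some (false, j)) : ℤ)) :=
          Finset.sum_le_sum fun j _ => hterm j
      _ = ((∑ j, (m (some (true, j)) + m (some (false, j))) : ℕ) : ℤ) := by push_cast; rfl
      _ ≤ ((∑ s, m s : ℕ) : ℤ) := by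
          rw [hsplit]; exact_mod_cast Nat.le_add_left _ _
      _ = (K' : ℤ) := by rw [hm]
  have hks : ∀ i, ∑ s, (m s : ℝ) * u s i = ∑ j, (k j : ℝ) * ht j i := by
    intro i
    rw [Fintype.sum_option, Fintype.sum_prod_type, Fintype.sum_bool]
    simp only [hu_def, if_true, Bool.false_eq_true, if_false, mul_zero, zero_add,
      ← Finset.sum_add_distrib]
    refine Finset.sum_congr rfl fun j _ => ?_
    rw [hk_def]
    push_cast
    ring
  have hK'r : (0:ℝ) < (K' : ℝ) := by exact_mod_cast hK'
  have hfinal : ∑ i, (y i - ∑ j, ((k j : ℝ) / K') * ht j i) ^ 2 ≤ M2 / K' := by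
    have he : ∀ i, (y i - ∑ j, ((k j : ℝ) / K') * ht j i) ^ 2
        = ((∑ s, (m s : ℝ) * u s i) - K' * y i) ^ 2 / (K' : ℝ) ^ 2 := by
      intro i
      rw [hks i]
      rw [eq_div_iff (by positivity)]
      have : ∑ j, ((k j : ℝ) / K') * ht j i = (∑ j, (k j : ℝ) * ht j i) / K' := by
        rw [Finset.sum_div]
        exact Finset.sum_congr rfl fun j _ => by ring
      rw [this]
      field_simp
      ring
    calc ∑ i, (y i - ∑ j, ((k j : ℝ) / K') * ht j i) ^ 2
        = (∑ i, ((∑ s, (m s : ℝ) * u s i) - K' * y i) ^ 2) / (K' : ℝ) ^ 2 := by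
          rw [Finset.sum_div]
          exact Finset.sum_congr rfl fun i _ => he i
      _ ≤ ((K' : ℝ) * M2) / (K' : ℝ) ^ 2 := by
          refine (div_le_div_iff_of_pos_right (by positivity)).mpr hE
      _ = M2 / K' := by
          field_simp
  have hβeq : ∀ j, α j * ((n : ℝ) ^ (1 / r) * Xb * Bb / lpNorm r (fun i => X i j)) = β j := by
    intro j
    rw [hα, ← hN]
    have hLj := (hcol j).ne'
    field_simp
  exact ⟨k, α, by rw [hα, hN], hk1, hyalpha, hβeq, hfinal⟩


/-- Theorem 3 of the paper (main covering-number bound): in the covering setup, the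
`√n ε`-covering number (in Euclidean norm) of the restriction
`F|S = {Xβ : ‖β‖_q ≤ B_b, ∑_j c ν j β j + δ ν ≤ 1 ∀ν}` is at most
`min{|P^{K₀}|, |P_c^{K}|}` when `ε < X_b B_b`, where `P^{K₀}` is the set of integer points
of the `ℓ₁` ball of radius `K₀ = ⌈X_b²B_b²/ε²⌉` and `P_c^{K}` additionally imposes the
scaled linear constraints `∑_j c̃ ν j k j ≤ K`; when `ε ≥ X_b B_b` a single point suffices. -/
theorem covering_number_bound
    (n p V : ℕ) (hn : 1 ≤ n) (hp : 1 ≤ p) (hV : 0 < V)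
    (r : ℝ) (hr : 2 ≤ r) (q : ℝ) (hq : q = r / (r - 1))
    (Xb Bb : ℝ) (hXb : 0 < Xb) (hBb : 0 < Bb)
    (X : Matrix (Fin n) (Fin p) ℝ)
    (hrow : ∀ i, lpNorm r (X i) ≤ Xb)
    (hcolne : ∀ j, (fun i => X i j) ≠ 0)
    (ht : Fin p → Fin n → ℝ)
    (hht : ∀ j, ht j = fun i =>
      ((n : ℝ) ^ (1 / r) * Xb * Bb / lpNorm r (fun i' => X i' j)) * X i j)
    (c : Fin V → Fin p → ℝ) (δ : Fin V → ℝ) (hδ : ∀ ν, 0 < δ ν)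
    (ct : Fin V → Fin p → ℝ)
    (hct : ∀ ν j, ct ν j =
      c ν j * ((n : ℝ) ^ (1 / r) * Xb * Bb) / lpNorm r (fun i => X i j))
    (hctpos : ∀ ν, 0 < ∑ j, |ct ν j|)
    (Xt : Matrix (Fin n) (Fin p) ℝ) (hXt : ∀ i j, Xt i j = ht j i)
    (lam : ℝ) (hlam : 0 < lam)
    (hquad : ∀ v : Fin p → ℝ, lam * ∑ j, (v j) ^ 2 ≤ ∑ i, (Xt.mulVec v i) ^ 2)
    (ε : ℝ) (hε0 : 0 < ε)
    (K0 K : ℕ) (hK0 : K0 = ⌈Xb ^ 2 * Bb ^ 2 / ε ^ 2⌉₊)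
    (hK : K = max K0
        ⌈(n : ℝ) * Xb ^ 2 * Bb ^ 2 /
          (lam * (⨅ ν : Fin V, δ ν / ∑ j, |ct ν j|) ^ 2)⌉₊)
    (FS : Set (Fin n → ℝ))
    (hFS : FS = {y | ∃ β : Fin p → ℝ,
      (lpNorm q β ≤ Bb ∧ ∀ ν, ∑ j, c ν j * β j + δ ν ≤ 1) ∧ y = X.mulVec β}) :
    (ε < Xb * Bb →
      ∃ U : Finset (Fin n → ℝ),
        U.card ≤ min ({k : Fin p → ℤ | (∑ j, |k j|) ≤ (K0 : ℤ)}.ncard)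
          ({k : Fin p → ℤ | (∑ j, |k j|) ≤ (K : ℤ) ∧
            ∀ ν, ∑ j, ct ν j * (k j : ℝ) ≤ (K : ℝ)}.ncard) ∧
        ∀ y ∈ FS, ∃ u ∈ U, Real.sqrt (∑ i, (y i - u i) ^ 2) ≤ Real.sqrt n * ε) ∧
    (Xb * Bb ≤ ε →
      ∃ U : Finset (Fin n → ℝ), U.card = 1 ∧
        ∀ y ∈ FS, ∃ u ∈ U, Real.sqrt (∑ i, (y i - u i) ^ 2) ≤ Real.sqrt n * ε) := by
  classical
  have hr0 : (0:ℝ) < r := lt_of_lt_of_le two_pos hr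
  have hr1 : (1:ℝ) < r := lt_of_lt_of_le one_lt_two hr
  have hn0 : (0:ℝ) < n := by exact_mod_cast hn
  set M2 : ℝ := (n : ℝ) * Xb ^ 2 * Bb ^ 2 with hM2
  constructor
  · -- main covering case
    intro hεlt
    have hK0pos : 0 < K0 := by
      rw [hK0]; exact Nat.ceil_pos.mpr (by positivity)
    have hKK0 : K0 ≤ K := hK ▸ le_max_left _ _
    have hKpos : 0 < K := lt_of_lt_of_le hK0pos hKK0
    have hK0ge : Xb ^ 2 * Bb ^ 2 / ε ^ 2 ≤ (K0 : ℝ) := hK0 ▸ Nat.le_ceil _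
    have herr : ∀ K' : ℕ, K0 ≤ K' → M2 / K' ≤ (n : ℝ) * ε ^ 2 := by
      intro K' hle
      have hK'r : (0:ℝ) < K' := by exact_mod_cast lt_of_lt_of_le hK0pos hle
      rw [div_le_iff₀ hK'r]
      have h2 : (K0 : ℝ) ≤ K' := by exact_mod_cast hle
      have h3 := hK0ge.trans h2
      rw [div_le_iff₀ (by positivity : (0:ℝ) < ε ^ 2)] at h3
      calc M2 = (n : ℝ) * (Xb ^ 2 * Bb ^ 2) := by rw [hM2]; ring
        _ ≤ (n : ℝ) * ((K' : ℝ) * ε ^ 2) := mul_le_mul_of_nonneg_left h3 hn0.le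
        _ = (n : ℝ) * ε ^ 2 * K' := by ring
    have hsqrt : ∀ (K' : ℕ) (yv uv : Fin n → ℝ), K0 ≤ K' →
        (∑ i, (yv i - uv i) ^ 2 ≤ M2 / K') →
        Real.sqrt (∑ i, (yv i - uv i) ^ 2) ≤ Real.sqrt n * ε := by
      intro K' yv uv hle hbound
      have h1 : ∑ i, (yv i - uv i) ^ 2 ≤ (n : ℝ) * ε ^ 2 := hbound.trans (herr K' hle)
      calc Real.sqrt (∑ i, (yv i - uv i) ^ 2) ≤ Real.sqrt ((n : ℝ) * ε ^ 2) :=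
            Real.sqrt_le_sqrt h1
        _ = Real.sqrt n * ε := by
            rw [Real.sqrt_mul hn0.le, Real.sqrt_sq hε0.le]
    -- the integer-point finsets
    set Fbox : ℕ → Finset (Fin p → ℤ) := fun m =>
      (Fintype.piFinset fun _ : Fin p => Finset.Icc (-(m : ℤ)) (m : ℤ)).filter
        (fun k => ∑ j, |k j| ≤ (m : ℤ)) with hFbox
    have hmem : ∀ (m : ℕ) (k : Fin p → ℤ), k ∈ Fbox m ↔ ∑ j, |k j| ≤ (m : ℤ) := by
      intro m k
      simp only [hFbox, Finset.mem_filter, Fintype.mem_piFinset, Finset.mem_Icc, ← abs_le]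
      exact ⟨fun h => h.2, fun h => ⟨fun j => le_trans (Finset.single_le_sum
        (f := fun j => |k j|) (fun j _ => abs_nonneg _) (Finset.mem_univ j)) h, h⟩⟩
    set Fc : Finset (Fin p → ℤ) := (Fbox K).filter
      (fun k => ∀ ν, ∑ j, ct ν j * (k j : ℝ) ≤ (K : ℝ)) with hFc
    have hset1 : {k : Fin p → ℤ | (∑ j, |k j|) ≤ (K0 : ℤ)}.ncard = (Fbox K0).card := by
      rw [← Set.ncard_coe_finset]
      congr 1
      ext k
      simp [hmem]
    have hset2 : {k : Fin p → ℤ | (∑ j, |k j|) ≤ (K : ℤ) ∧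
        ∀ ν, ∑ j, ct ν j * (k j : ℝ) ≤ (K : ℝ)}.ncard = Fc.card := by
      rw [← Set.ncard_coe_finset]
      congr 1
      ext k
      simp [hFc, Finset.mem_filter, hmem]
    set Φ : ℕ → (Fin p → ℤ) → (Fin n → ℝ) :=
      fun K' k => fun i => ∑ j, ((k j : ℝ) / K') * ht j i with hΦ
    -- the main construction
    have hcov : ∀ K' : ℕ, 0 < K' → ∀ y ∈ FS, ∃ k : Fin p → ℤ,
        ((∑ j, |k j|) ≤ (K' : ℤ)) ∧
        (∑ i, (y i - Φ K' k i) ^ 2 ≤ M2 / K') ∧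
        (∀ ν, ∑ j, ct ν j * ((k j : ℝ) / (K' : ℝ)) ≤ (1 - δ ν) +
          (∑ j, |ct ν j|) * Real.sqrt (M2 / ((K' : ℝ) * lam))) := by
      intro K' hK' y hy
      rw [hFS] at hy
      obtain ⟨β, ⟨hβ, hcons⟩, hyX⟩ := hy
      obtain ⟨k, α, hαdef, hk1, hyalpha, hβeq, hfinal⟩ :=
        key_step n p hn r q hr hq Xb Bb hXb hBb X hrow hcolne ht hht β hβ K' hK'
      have hK'r : (0:ℝ) < (K' : ℝ) := by exact_mod_cast hK'
      refine ⟨k, hk1, by rw [hyX]; exact hfinal, ?_⟩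
      intro ν
      set d : Fin p → ℝ := fun j => α j - (k j : ℝ) / K' with hd
      have hXtd : ∀ i, Xt.mulVec d i = X.mulVec β i - Φ K' k i := by
        intro i
        have : Xt.mulVec d i = ∑ j, (α j * ht j i - ((k j : ℝ) / K') * ht j i) := by
          simp only [Matrix.mulVec, dotProduct]
          refine Finset.sum_congr rfl fun j _ => ?_
          show Xt i j * d j = _
          rw [hXt i j, hd]
          ring
        rw [this, Finset.sum_sub_distrib, ← hyalpha i, hΦ]
      have hsq : ∑ i, (Xt.mulVec d i) ^ 2 ≤ M2 / K' := by
        have : ∀ i, (Xt.mulVec d i) ^ 2 = (X.mulVec β i - Φ K' k i) ^ 2 := fun i => by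
          rw [hXtd i]
        rw [Finset.sum_congr rfl fun i _ => this i]
        exact hfinal
      have hd2 : ∑ j, d j ^ 2 ≤ M2 / ((K' : ℝ) * lam) := by
        have h1 := (hquad d).trans hsq
        rw [← div_div M2 (K' : ℝ) lam, le_div_iff₀ hlam]
        linarith
      have hdj : ∀ j, |d j| ≤ Real.sqrt (M2 / ((K' : ℝ) * lam)) := by
        intro j
        rw [← Real.sqrt_sq_eq_abs]
        refine Real.sqrt_le_sqrt (le_trans ?_ hd2)
        exact Finset.single_le_sum (f := fun j => d j ^ 2)
          (fun j _ => sq_nonneg _) (Finset.mem_univ j)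
      have hctα : ∑ j, ct ν j * α j = ∑ j, c ν j * β j := by
        refine Finset.sum_congr rfl fun j _ => ?_
        calc ct ν j * α j
            = c ν j * (α j * ((n : ℝ) ^ (1 / r) * Xb * Bb / lpNorm r (fun i => X i j))) := by
              rw [hct ν j]; ring
          _ = c ν j * β j := by rw [hβeq j]
      have hsplitsum : ∑ j, ct ν j * ((k j : ℝ) / (K' : ℝ))
          = ∑ j, ct ν j * α j - ∑ j, ct ν j * d j := by
        rw [← Finset.sum_sub_distrib]
        refine Finset.sum_congr rfl fun j _ => ?_
        rw [hd]; ring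
      have hbound2 : -∑ j, ct ν j * d j ≤ (∑ j, |ct ν j|) * Real.sqrt (M2 / ((K' : ℝ) * lam)) := by
        rw [Finset.sum_mul]
        rw [← Finset.sum_neg_distrib]
        refine Finset.sum_le_sum fun j _ => ?_
        calc -(ct ν j * d j) ≤ |ct ν j * d j| := neg_le_abs _
          _ = |ct ν j| * |d j| := abs_mul _ _
          _ ≤ |ct ν j| * Real.sqrt (M2 / ((K' : ℝ) * lam)) :=
              mul_le_mul_of_nonneg_left (hdj j) (abs_nonneg _)
      have hcβ : ∑ j, c ν j * β j ≤ 1 - δ ν := by linarith [hcons ν]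
      rw [hsplitsum, hctα]
      linarith
    -- choose the smaller of the two covers
    rcases le_total ({k : Fin p → ℤ | (∑ j, |k j|) ≤ (K0 : ℤ)}.ncard)
      ({k : Fin p → ℤ | (∑ j, |k j|) ≤ (K : ℤ) ∧
        ∀ ν, ∑ j, ct ν j * (k j : ℝ) ≤ (K : ℝ)}.ncard) with hmin | hmin
    · refine ⟨(Fbox K0).image (Φ K0), ?_, ?_⟩
      · rw [min_eq_left hmin, hset1]
        exact Finset.card_image_le
      · intro y hy
        obtain ⟨k, hk1, hk2, _⟩ := hcov K0 hK0pos y hy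
        exact ⟨Φ K0 k, Finset.mem_image_of_mem _ ((hmem K0 k).mpr hk1),
          hsqrt K0 y (Φ K0 k) le_rfl hk2⟩
    · refine ⟨Fc.image (Φ K), ?_, ?_⟩
      · rw [min_eq_right hmin, hset2]
        exact Finset.card_image_le
      · intro y hy
        obtain ⟨k, hk1, hk2, hk3⟩ := hcov K hKpos y hy
        have hKr : (0:ℝ) < (K : ℝ) := by exact_mod_cast hKpos
        -- numeric bound involving the infimum
        have hccons : ∀ ν, ∑ j, ct ν j * (k j : ℝ) ≤ (K : ℝ) := by
          intro ν
          set I : ℝ := ⨅ ν : Fin V, δ ν / ∑ j, |ct ν j| with hI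
          have hne : Nonempty (Fin V) := ⟨⟨0, hV⟩⟩
          have hIbdd : BddBelow (Set.range fun ν : Fin V => δ ν / ∑ j, |ct ν j|) := by
            refine ⟨0, ?_⟩
            rintro x ⟨ν', rfl⟩
            exact div_nonneg (hδ ν').le (hctpos ν').le
          have hIle : I ≤ δ ν / ∑ j, |ct ν j| := ciInf_le hIbdd ν
          have hIpos : 0 < I := by
            obtain ⟨ν0, hν0⟩ := Finite.exists_min (fun ν : Fin V => δ ν / ∑ j, |ct ν j|)
            exact lt_of_lt_of_le (div_pos (hδ ν0) (hctpos ν0)) (le_ciInf hν0)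
          have hKge : (n : ℝ) * Xb ^ 2 * Bb ^ 2 / (lam * I ^ 2) ≤ (K : ℝ) := by
            have h1 : ⌈(n : ℝ) * Xb ^ 2 * Bb ^ 2 / (lam * I ^ 2)⌉₊ ≤ K := by
              rw [hK, hI]; exact le_max_right _ _
            exact le_trans (Nat.le_ceil _) (by exact_mod_cast h1)
          have hM2K : M2 / ((K : ℝ) * lam) ≤ I ^ 2 := by
            rw [div_le_iff₀ (by positivity : (0:ℝ) < lam * I ^ 2)] at hKge
            rw [div_le_iff₀ (by positivity : (0:ℝ) < (K : ℝ) * lam), hM2]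
            nlinarith [hKge]
          have hsqrtI : Real.sqrt (M2 / ((K : ℝ) * lam)) ≤ I := by
            calc Real.sqrt (M2 / ((K : ℝ) * lam)) ≤ Real.sqrt (I ^ 2) :=
                Real.sqrt_le_sqrt hM2K
              _ = I := by rw [Real.sqrt_sq hIpos.le]
          have hnum : (∑ j, |ct ν j|) * Real.sqrt (M2 / ((K : ℝ) * lam)) ≤ δ ν := by
            calc (∑ j, |ct ν j|) * Real.sqrt (M2 / ((K : ℝ) * lam))
                ≤ (∑ j, |ct ν j|) * I :=
                  mul_le_mul_of_nonneg_left hsqrtI (hctpos ν).le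
              _ ≤ (∑ j, |ct ν j|) * (δ ν / ∑ j, |ct ν j|) :=
                  mul_le_mul_of_nonneg_left hIle (hctpos ν).le
              _ = δ ν := mul_div_cancel₀ (δ ν) (hctpos ν).ne'
          have h7 : ∑ j, ct ν j * ((k j : ℝ) / (K : ℝ)) ≤ 1 := by
            have := hk3 ν
            linarith
          have h8 : ∑ j, ct ν j * (k j : ℝ) = (K : ℝ) * ∑ j, ct ν j * ((k j : ℝ) / (K : ℝ)) := by
            rw [Finset.mul_sum]
            exact Finset.sum_congr rfl fun j _ => by field_simp
          rw [h8]
          calc (K : ℝ) * ∑ j, ct ν j * ((k j : ℝ) / (K : ℝ)) ≤ (K : ℝ) * 1 :=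
              mul_le_mul_of_nonneg_left h7 hKr.le
            _ = (K : ℝ) := mul_one _
        refine ⟨Φ K k, Finset.mem_image_of_mem _ ?_, hsqrt K y (Φ K k) hKK0 hk2⟩
        rw [hFc, Finset.mem_filter]
        exact ⟨(hmem K k).mpr hk1, hccons⟩
  · -- trivial case ε ≥ Xb * Bb
    intro hge
    refine ⟨{fun _ => 0}, Finset.card_singleton _, ?_⟩
    intro y hy
    rw [hFS] at hy
    obtain ⟨β, ⟨hβ, _⟩, hyX⟩ := hy
    refine ⟨fun _ => 0, Finset.mem_singleton_self _, ?_⟩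
    have hrowb : ∀ i, |X.mulVec β i| ≤ Xb * Bb := by
      intro i
      have h1 : |X.mulVec β i| ≤ ∑ j, |X i j| * |β j| := by
        simp only [Matrix.mulVec, dotProduct]
        refine le_trans (Finset.abs_sum_le_sum_abs _ _) ?_
        exact le_of_eq (Finset.sum_congr rfl fun j _ => abs_mul _ _)
      refine h1.trans ((holder_sum hr1 hq (X i) β).trans ?_)
      exact mul_le_mul (hrow i) hβ (lpNorm_nonneg _ _) hXb.le
    have hbd : ∑ i, (y i - 0) ^ 2 ≤ (n : ℝ) * (Xb * Bb) ^ 2 := by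
      calc ∑ i, (y i - 0) ^ 2 ≤ ∑ _i : Fin n, (Xb * Bb) ^ 2 := by
            refine Finset.sum_le_sum fun i _ => ?_
            rw [sub_zero, hyX, ← sq_abs]
            exact pow_le_pow_left₀ (abs_nonneg _) (hrowb i) 2
        _ = (n : ℝ) * (Xb * Bb) ^ 2 := by simp [mul_comm]
    calc Real.sqrt (∑ i, (y i - (fun _ => (0:ℝ)) i) ^ 2)
        ≤ Real.sqrt ((n : ℝ) * (Xb * Bb) ^ 2) := Real.sqrt_le_sqrt hbd
      _ = Real.sqrt n * (Xb * Bb) := by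
          rw [Real.sqrt_mul hn0.le, Real.sqrt_sq (by positivity)]
      _ ≤ Real.sqrt n * ε := mul_le_mul_of_nonneg_left hge (Real.sqrt_nonneg _)
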